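/- For the linearized biofilm equation ĥ_t(1 + c³K/R₀ α²) = (c³K/(2R₀))α² ĥ − δ²c²α² ĥ with plane-wave solutions ĥ = e^{iαx + βt}, the growth rate is β = ((c³K/(2R₀))α² − δ²c²α²)/(1 + (c³K/R₀)α²); in particular if δ = 0 then β > 0 for every α ≠ 0 and every c > 0 (constant profiles are unstable), while if δ² > c K/(2R₀) then β < 0 for all α ≠ 0 (stability). -/
import Mathlib

/-- For the linearized biofilm equation with plane waves `e^{iax+βt}`, the growth
rate is `β = ((c³K/(2R₀))a² − δ²c²a²)/(1 + (c³K/R₀)a²)`; if `δ = 0` then `β > 0` for every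
`a ≠ 0` (instability of constants), while if `δ² > cK/(2R₀)` then `β < 0` for all `a ≠ 0`. -/
theorem stmt15 (K R₀ c δ a : ℝ) (hK : 0 < K) (hR₀ : 0 < R₀) (hc : 0 < c) (hδ : 0 ≤ δ) :
    ((((c ^ 3 * K / (2 * R₀)) * a ^ 2 - δ ^ 2 * c ^ 2 * a ^ 2) / (1 + (c ^ 3 * K / R₀) * a ^ 2))
        * (1 + (c ^ 3 * K / R₀) * a ^ 2)
      = (c ^ 3 * K / (2 * R₀)) * a ^ 2 - δ ^ 2 * c ^ 2 * a ^ 2)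
    ∧ (δ = 0 → a ≠ 0 →
        0 < ((c ^ 3 * K / (2 * R₀)) * a ^ 2 - δ ^ 2 * c ^ 2 * a ^ 2)
              / (1 + (c ^ 3 * K / R₀) * a ^ 2))
    ∧ (δ ^ 2 > c * K / (2 * R₀) → a ≠ 0 →
        ((c ^ 3 * K / (2 * R₀)) * a ^ 2 - δ ^ 2 * c ^ 2 * a ^ 2)
              / (1 + (c ^ 3 * K / R₀) * a ^ 2) < 0) := by
  have hden : 0 < 1 + (c ^ 3 * K / R₀) * a ^ 2 := by positivity
  refine ⟨div_mul_cancel₀ _ (ne_of_gt hden), ?_, ?_⟩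
  · intro h0 ha
    apply div_pos _ hden
    rw [h0]
    have ha2 : 0 < a ^ 2 := by positivity
    have : 0 < c ^ 3 * K / (2 * R₀) := by positivity
    nlinarith
  · intro hgt ha
    apply div_neg_of_neg_of_pos _ hden
    have ha2 : 0 < a ^ 2 := by positivity
    have h1 : c ^ 3 * K / (2 * R₀) < δ ^ 2 * c ^ 2 := by
      have : c * K / (2 * R₀) < δ ^ 2 := hgt
      have hc2 : 0 < c ^ 2 := by positivity
      calc c ^ 3 * K / (2 * R₀) = (c * K / (2 * R₀)) * c ^ 2 := by ring
        _ < δ ^ 2 * c ^ 2 := by nlinarith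
    nlinarith
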